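/- A column-strict filling C = x_1…x_r of a height-r column with entries in {1 < … < n < n̄ < … < 1̄} is a Kashiwara–Nakashima column (i.e., contains no pair (z, z̄) with z = x_p, z̄ = x_q and q − p ≤ r − z) if and only if it can be split: writing I = {z_1 > … > z_k} for the unbarred letters z such that both z and z̄ occur in C, there exist unbarred letters t_1 > … > t_k with t_1 the greatest letter < z_1 such that neither t_1 nor t̄_1 is in C, and inductively t_i the greatest letter < min(t_{i−1}, z_i) with neither t_i nor t̄_i in C. -/

import Mathlib

/- Letters of the alphabet `1 < … < n < n̄ < … < 1̄` are encoded as `1, …, 2n`: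
the unbarred letter `z` (`1 ≤ z ≤ n`) is `z`, and the barred letter `z̄` is `2n+1-z`. -/

/-- A column of height `r`: a strictly increasing filling with entries in the
`2n`-letter alphabet. -/
def IsColumn (n r : ℕ) (C : Fin r → ℕ) : Prop :=
  StrictMono C ∧ ∀ p, 1 ≤ C p ∧ C p ≤ 2 * n

/-- The Kashiwara–Nakashima condition: no pair `(z, z̄)` with `z = x_p`, `z̄ = x_q`
and `q - p ≤ r - z` (positions `1`-based; here `p, q` are `0`-based). -/
def IsKN (n r : ℕ) (C : Fin r → ℕ) : Prop :=
  ¬ ∃ (z : ℕ) (p q : Fin r), 1 ≤ z ∧ z ≤ n ∧ C p = z ∧ C q = 2 * n + 1 - z ∧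
    (q : ℤ) - (p : ℤ) ≤ (r : ℤ) - (z : ℤ)

/-- The set `I = {z : both z and z̄ occur in C}` of unbarred letters. -/
def pairSet (n r : ℕ) (C : Fin r → ℕ) : Finset ℕ :=
  (Finset.Icc 1 n).filter (fun z => (∃ p, C p = z) ∧ ∃ q, C q = 2 * n + 1 - z)

/-- `I` listed decreasingly: `z_1 > z_2 > … > z_k`. -/
def zList (n r : ℕ) (C : Fin r → ℕ) : List ℕ :=
  ((pairSet n r C).sort (· ≤ ·)).reverse

/-- `ts` is a splitting sequence for `C`: `t_1` is the greatest letter `< z_1` with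
`t_1, t̄_1 ∉ C`, and inductively `t_i` is the greatest letter `< min(t_{i-1}, z_i)`
with `t_i, t̄_i ∉ C`. -/
def IsSplitting (n r : ℕ) (C : Fin r → ℕ) (ts : List ℕ) : Prop :=
  ts.length = (zList n r C).length ∧
  ∀ i < ts.length,
    IsGreatest {t : ℕ | 1 ≤ t ∧
      t < (if i = 0 then (zList n r C)[0]! else min (ts[i-1]!) ((zList n r C)[i]!)) ∧
      (∀ p, C p ≠ t) ∧ (∀ p, C p ≠ 2 * n + 1 - t)} (ts[i]!)

/-- `C` can be split. -/
def CanSplit (n r : ℕ) (C : Fin r → ℕ) : Prop :=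
  ∃ ts : List ℕ, IsSplitting n r C ts

namespace KNsplit

/-- "t is a free letter": neither `t` nor `t̄` occurs in `C`. -/
def freeP (n r : ℕ) (C : Fin r → ℕ) (t : ℕ) : Prop :=
  (∀ p, C p ≠ t) ∧ (∀ p, C p ≠ 2 * n + 1 - t)

instance (n r : ℕ) (C : Fin r → ℕ) : DecidablePred (freeP n r C) := fun _ => by
  unfold freeP; infer_instance

/-- The set of free letters. -/
def freeSet (n r : ℕ) (C : Fin r → ℕ) : Finset ℕ :=
  (Finset.Icc 1 n).filter (freeP n r C)

/-- Free letters `< b`. -/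
def Gs (n r : ℕ) (C : Fin r → ℕ) (b : ℕ) : Finset ℕ :=
  (freeSet n r C).filter (· < b)

/-- Number of free letters `≤ b`. -/
def Fc (n r : ℕ) (C : Fin r → ℕ) (b : ℕ) : ℕ :=
  ((freeSet n r C).filter (· ≤ b)).card

/-- Number of paired letters `≤ b`. -/
def Pc (n r : ℕ) (C : Fin r → ℕ) (b : ℕ) : ℕ :=
  ((pairSet n r C).filter (· ≤ b)).card

/-- Number of entries of `C` that are `≤ z`. -/
def Ac (n r : ℕ) (C : Fin r → ℕ) (z : ℕ) : ℕ :=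
  (Finset.univ.filter (fun j : Fin r => C j ≤ z)).card

/-- Number of entries of `C` that are `≥ z̄`. -/
def Bc (n r : ℕ) (C : Fin r → ℕ) (z : ℕ) : ℕ :=
  (Finset.univ.filter (fun j : Fin r => 2 * n + 1 - z ≤ C j)).card

section basic

variable (n r : ℕ) (C : Fin r → ℕ)

lemma mem_pairSet {z : ℕ} :
    z ∈ pairSet n r C ↔ (1 ≤ z ∧ z ≤ n) ∧ (∃ p, C p = z) ∧ ∃ q, C q = 2 * n + 1 - z := by
  simp [pairSet, Finset.mem_filter, Finset.mem_Icc, and_assoc]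

lemma mem_freeSet {t : ℕ} :
    t ∈ freeSet n r C ↔ (1 ≤ t ∧ t ≤ n) ∧ freeP n r C t := by
  simp [freeSet, Finset.mem_filter, Finset.mem_Icc]

lemma not_freeP_of_mem_pairSet {z : ℕ} (hz : z ∈ pairSet n r C) : ¬ freeP n r C z := by
  rw [mem_pairSet] at hz
  obtain ⟨-, ⟨p, hp⟩, -⟩ := hz
  rintro ⟨h1, -⟩
  exact h1 p hp

end basic

section counting

variable (n r : ℕ) (C : Fin r → ℕ)

/-- entries `≤ z` biject with occurring unbarred letters `≤ z` (for `z ≤ n`). -/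
lemma Ac_eq (hC : IsColumn n r C) (z : ℕ) (hzn : z ≤ n) :
    Ac n r C z = ((Finset.Icc 1 z).filter (fun w => ∃ p, C p = w)).card := by
  apply Finset.card_bij (fun j _ => C j)
  · intro a ha
    simp only [Finset.mem_filter, Finset.mem_univ, true_and] at ha
    simp only [Finset.mem_filter, Finset.mem_Icc]
    exact ⟨⟨(hC.2 a).1, ha⟩, a, rfl⟩
  · intro a _ b _ h
    exact hC.1.injective h
  · intro w hw
    simp only [Finset.mem_filter, Finset.mem_Icc] at hw
    obtain ⟨⟨-, hw2⟩, p, hp⟩ := hw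
    exact ⟨p, by simp [hp, hw2], hp⟩

/-- entries `≥ z̄` biject with occurring barred letters `w̄`, `w ≤ z` (for `z ≤ n`). -/
lemma Bc_eq (hC : IsColumn n r C) (z : ℕ) (hzn : z ≤ n) :
    Bc n r C z = ((Finset.Icc 1 z).filter (fun w => ∃ p, C p = 2 * n + 1 - w)).card := by
  apply Finset.card_bij (fun j _ => 2 * n + 1 - C j)
  · intro a ha
    simp only [Finset.mem_filter, Finset.mem_univ, true_and] at ha
    have h1 := (hC.2 a).1
    have h2 := (hC.2 a).2
    simp only [Finset.mem_filter, Finset.mem_Icc]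
    refine ⟨⟨by omega, by omega⟩, a, by omega⟩
  · intro a _ b _ h
    have h2a := (hC.2 a).2
    have h2b := (hC.2 b).2
    exact hC.1.injective (by omega)
  · intro w hw
    simp only [Finset.mem_filter, Finset.mem_Icc] at hw
    obtain ⟨⟨hw1, hw2⟩, p, hp⟩ := hw
    refine ⟨p, ?_, by omega⟩
    simp only [Finset.mem_filter, Finset.mem_univ, true_and]
    omega

/-- The key counting identity: `Ac z + Bc z + Fc z = z + Pc z` for `z ≤ n`. -/
lemma key_identity (hC : IsColumn n r C) (z : ℕ) (hzn : z ≤ n) :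
    Ac n r C z + Bc n r C z + Fc n r C z = z + Pc n r C z := by
  have hF : Fc n r C z = ((Finset.Icc 1 z).filter (freeP n r C)).card := by
    unfold Fc freeSet
    congr 1
    ext t
    simp only [Finset.mem_filter, Finset.mem_Icc]
    constructor
    · rintro ⟨⟨⟨ht1, ht2⟩, htf⟩, htle⟩
      exact ⟨⟨ht1, htle⟩, htf⟩
    · rintro ⟨⟨ht1, htle⟩, htf⟩
      exact ⟨⟨⟨ht1, by omega⟩, htf⟩, htle⟩
  have hP : Pc n r C z =
      ((Finset.Icc 1 z).filter
        (fun w => (∃ p, C p = w) ∧ ∃ q, C q = 2 * n + 1 - w)).card := by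
    unfold Pc pairSet
    congr 1
    ext t
    simp only [Finset.mem_filter, Finset.mem_Icc]
    constructor
    · rintro ⟨⟨⟨ht1, ht2⟩, htf⟩, htle⟩
      exact ⟨⟨ht1, htle⟩, htf⟩
    · rintro ⟨⟨ht1, htle⟩, htf⟩
      exact ⟨⟨⟨ht1, by omega⟩, htf⟩, htle⟩
  rw [Ac_eq n r C hC z hzn, Bc_eq n r C hC z hzn, hF, hP]
  have hcard : (Finset.Icc 1 z).card = z := by simp
  rw [Finset.card_filter, Finset.card_filter, Finset.card_filter, Finset.card_filter]
  rw [← Finset.sum_add_distrib, ← Finset.sum_add_distrib]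
  have hpt : ∀ w ∈ Finset.Icc 1 z,
      ((if (∃ p, C p = w) then 1 else 0) + (if (∃ p, C p = 2 * n + 1 - w) then 1 else 0)
        + (if freeP n r C w then 1 else 0)) =
      (1 + if ((∃ p, C p = w) ∧ ∃ q, C q = 2 * n + 1 - w) then 1 else 0) := by
    intro w _
    have hf : freeP n r C w ↔ ¬(∃ p, C p = w) ∧ ¬(∃ p, C p = 2 * n + 1 - w) := by
      simp [freeP, not_exists]
    simp only [hf]
    by_cases h1 : ∃ p, C p = w <;> by_cases h2 : ∃ p, C p = 2 * n + 1 - w <;>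
      simp [h1, h2]
  rw [Finset.sum_congr rfl hpt, Finset.sum_add_distrib, Finset.sum_const, hcard]
  simp [mul_comm]

/-- `IsKN` in terms of the counts. -/
lemma isKN_iff_counts (hC : IsColumn n r C) :
    IsKN n r C ↔ ∀ z ∈ pairSet n r C, Ac n r C z + Bc n r C z ≤ z := by
  have key : ∀ (z : ℕ) (p q : Fin r), 1 ≤ z → z ≤ n → C p = z → C q = 2 * n + 1 - z →
      Ac n r C z + Bc n r C z = (p : ℕ) + 1 + (r - (q : ℕ)) := by
    intro z p q h1 h2 hp hq
    have hA : Ac n r C z = (p : ℕ) + 1 := by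
      unfold Ac
      have : Finset.univ.filter (fun j : Fin r => C j ≤ z) = Finset.Iic p := by
        ext j
        simp only [Finset.mem_filter, Finset.mem_univ, true_and, Finset.mem_Iic]
        rw [← hp]
        exact hC.1.le_iff_le
      rw [this, Fin.card_Iic]
    have hB : Bc n r C z = r - (q : ℕ) := by
      unfold Bc
      have : Finset.univ.filter (fun j : Fin r => 2 * n + 1 - z ≤ C j) = Finset.Ici q := by
        ext j
        simp only [Finset.mem_filter, Finset.mem_univ, true_and, Finset.mem_Ici]
        rw [← hq]
        exact hC.1.le_iff_le
      rw [this, Fin.card_Ici]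
    rw [hA, hB]
  constructor
  · intro hkn z hz
    rw [mem_pairSet] at hz
    obtain ⟨⟨h1, h2⟩, ⟨p, hp⟩, ⟨q, hq⟩⟩ := hz
    by_contra hcon
    push_neg at hcon
    apply hkn
    refine ⟨z, p, q, h1, h2, hp, hq, ?_⟩
    have := key z p q h1 h2 hp hq
    have hq' : (q : ℕ) < r := q.2
    omega
  · rintro h ⟨z, p, q, h1, h2, hp, hq, hle⟩
    have hz : z ∈ pairSet n r C := by
      rw [mem_pairSet]; exact ⟨⟨h1, h2⟩, ⟨p, hp⟩, ⟨q, hq⟩⟩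
    have := h z hz
    have hk := key z p q h1 h2 hp hq
    have hq' : (q : ℕ) < r := q.2
    omega

end counting

section zlist

variable (n r : ℕ) (C : Fin r → ℕ)

lemma sorted_get_lt {l : List ℕ} (hs : List.Pairwise (· < ·) l) {a b : ℕ}
    (ha : a < l.length) (hb : b < l.length) (hab : a < b) :
    l[a] < l[b] := by
  have := hs.rel_get_of_lt (a := ⟨a, ha⟩) (b := ⟨b, hb⟩) (Fin.mk_lt_mk.mpr hab)
  simpa using this

lemma zList_getElem {i : ℕ} (hi : i < (zList n r C).length) :
    (zList n r C)[i]'hi =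
      ((pairSet n r C).sort (· ≤ ·))[((pairSet n r C).sort (· ≤ ·)).length - 1 - i]'(by
        simp only [zList, List.length_reverse] at hi; omega) := by
  simp only [zList, List.getElem_reverse]

lemma zList_get_mem {i : ℕ} (hi : i < (zList n r C).length) :
    (zList n r C)[i]'hi ∈ pairSet n r C := by
  rw [zList_getElem n r C hi, ← Finset.mem_sort (α := ℕ) (· ≤ ·)]
  exact List.getElem_mem _

lemma zList_strictAnti {i j : ℕ} (hij : i < j) (hj : j < (zList n r C).length) :
    (zList n r C)[j]'hj < (zList n r C)[i]'(lt_trans hij hj) := by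
  have hlen : (zList n r C).length = ((pairSet n r C).sort (· ≤ ·)).length := by
    simp [zList]
  rw [zList_getElem n r C hj, zList_getElem n r C (lt_trans hij hj)]
  exact sorted_get_lt (Finset.sortedLT_sort _).pairwise _ _ (by omega)

lemma zList_surj {z : ℕ} (hz : z ∈ pairSet n r C) :
    ∃ i, ∃ hi : i < (zList n r C).length, (zList n r C)[i]'hi = z := by
  have : z ∈ zList n r C := by
    simp only [zList, List.mem_reverse, Finset.mem_sort]
    exact hz
  exact List.mem_iff_getElem.mp this

/-- the number of paired letters `≤ zList[i]` is `k - i`. -/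
lemma Pc_zList {i : ℕ} (hi : i < (zList n r C).length) :
    Pc n r C ((zList n r C)[i]'hi) = (zList n r C).length - i := by
  have hlen : (zList n r C).length = ((pairSet n r C).sort (· ≤ ·)).length := by
    simp [zList]
  set l := (pairSet n r C).sort (· ≤ ·) with hl
  have hs : List.Pairwise (· < ·) l := (Finset.sortedLT_sort (pairSet n r C)).pairwise
  have hjk : l.length - 1 - i < l.length := by omega
  rw [zList_getElem n r C hi]
  set j := l.length - 1 - i with hj
  have hset : (pairSet n r C).filter (· ≤ l[j]'hjk) = (l.take (j+1)).toFinset := by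
    ext x
    simp only [Finset.mem_filter, List.mem_toFinset]
    constructor
    · rintro ⟨hx, hxle⟩
      have hxl : x ∈ l := by rw [hl]; exact (Finset.mem_sort _).mpr hx
      obtain ⟨m, hm, hmx⟩ := List.mem_iff_getElem.mp hxl
      have hmj : m ≤ j := by
        by_contra hcon
        push_neg at hcon
        have hlt := sorted_get_lt hs hjk hm hcon
        omega
      rw [List.mem_take_iff_getElem]
      refine ⟨m, by omega, hmx⟩
    · intro hx
      rw [List.mem_take_iff_getElem] at hx
      obtain ⟨m, hm, hmx⟩ := hx
      have hm' : m < l.length := by omega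
      have hmj : m ≤ j := by omega
      have hxl : x ∈ l := hmx ▸ List.getElem_mem hm'
      refine ⟨(Finset.mem_sort _).mp (hl ▸ hxl), ?_⟩
      rcases eq_or_lt_of_le hmj with h | h
      · subst h; omega
      · have hlt := sorted_get_lt hs hm' hjk h
        omega
  unfold Pc
  rw [hset]
  have hnd : (l.take (j+1)).Nodup := ((l.take_sublist (j+1)).nodup) (Finset.sort_nodup _ _)
  rw [List.toFinset_card_of_nodup hnd, List.length_take]
  omega

end zlist

section greedy

variable (n r : ℕ) (C : Fin r → ℕ)

/-- The greedy choice: greatest free letter `< b` (or `0` if none). -/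
def gmax (b : ℕ) : ℕ :=
  if h : (Gs n r C b).Nonempty then (Gs n r C b).max' h else 0

/-- The greedy splitting letters. -/
def tF : ℕ → ℕ
  | 0 => gmax n r C ((zList n r C)[0]!)
  | (i+1) => gmax n r C (min (tF i) ((zList n r C)[i+1]!))

/-- The bound used at step `i`. -/
def bnd : ℕ → ℕ
  | 0 => (zList n r C)[0]!
  | (i+1) => min (tF n r C i) ((zList n r C)[i+1]!)

lemma tF_eq (i : ℕ) : tF n r C i = gmax n r C (bnd n r C i) := by
  cases i <;> rfl

lemma gmax_isGreatest {b : ℕ} (hb : b ≤ n) (h : (Gs n r C b).Nonempty) :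
    IsGreatest {t : ℕ | 1 ≤ t ∧ t < b ∧ freeP n r C t} (gmax n r C b) := by
  rw [gmax, dif_pos h]
  constructor
  · have hm := (Gs n r C b).max'_mem h
    simp only [Gs, Finset.mem_filter, mem_freeSet] at hm
    exact ⟨hm.1.1.1, hm.2, hm.1.2⟩
  · intro t ht
    obtain ⟨ht1, ht2, ht3⟩ := ht
    apply Finset.le_max'
    simp only [Gs, Finset.mem_filter, mem_freeSet]
    exact ⟨⟨⟨ht1, by omega⟩, ht3⟩, ht2⟩

lemma gmax_mem {b : ℕ} (h : (Gs n r C b).Nonempty) : gmax n r C b ∈ Gs n r C b := by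
  rw [gmax, dif_pos h]; exact (Gs n r C b).max'_mem h

lemma gmax_le {b t : ℕ} (h : (Gs n r C b).Nonempty) (ht : t ∈ Gs n r C b) :
    t ≤ gmax n r C b := by
  rw [gmax, dif_pos h]; exact Finset.le_max' _ _ ht

/-- free letters `< z` are exactly free letters `≤ z` when `z` is not free. -/
lemma Gs_eq_of_not_free {z : ℕ} (hz : ¬ freeP n r C z) :
    Gs n r C z = (freeSet n r C).filter (· ≤ z) := by
  unfold Gs
  apply Finset.filter_congr
  intro t ht
  rw [mem_freeSet] at ht
  have : t ≠ z := fun h => hz (h ▸ ht.2)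
  constructor
  · intro hlt; omega
  · intro hle; omega

/-- free letters `≤ gmax b` are exactly free letters `< b` (when nonempty). -/
lemma filter_le_gmax {b : ℕ} (h : (Gs n r C b).Nonempty) :
    (freeSet n r C).filter (· ≤ gmax n r C b) = Gs n r C b := by
  unfold Gs
  apply Finset.filter_congr
  intro t ht
  have hmem := gmax_mem n r C h
  simp only [Gs, Finset.mem_filter] at hmem
  constructor
  · intro hle
    omega
  · intro hlt
    exact gmax_le n r C h (by simp only [Gs, Finset.mem_filter]; exact ⟨ht, hlt⟩)

/-- card of free `< t` vs free `≤ t` for `t` free. -/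
lemma card_Gs_self {t : ℕ} (ht : t ∈ freeSet n r C) :
    Fc n r C t = (Gs n r C t).card + 1 := by
  unfold Fc Gs
  have : (freeSet n r C).filter (· ≤ t) = insert t ((freeSet n r C).filter (· < t)) := by
    ext x
    simp only [Finset.mem_filter, Finset.mem_insert]
    constructor
    · rintro ⟨hx, hle⟩
      rcases eq_or_lt_of_le hle with h | h
      · exact Or.inl h
      · exact Or.inr ⟨hx, h⟩
    · rintro (rfl | ⟨hx, hlt⟩)
      · exact ⟨ht, le_refl _⟩
      · exact ⟨hx, le_of_lt hlt⟩
  rw [this, Finset.card_insert_of_notMem (by simp)]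

end greedy

end KNsplit

open KNsplit in
/-- A column is a Kashiwara–Nakashima column if and only if it can be split. -/
theorem isKN_iff_canSplit (n r : ℕ) (hr : r ≤ n) (C : Fin r → ℕ)
    (hC : IsColumn n r C) :
    IsKN n r C ↔ CanSplit n r C := by
  set k := (zList n r C).length with hk
  -- basic facts about zList entries
  have hzmem : ∀ i (hi : i < k), (zList n r C)[i]! ∈ pairSet n r C := by
    intro i hi
    rw [getElem!_pos (zList n r C) i hi]
    exact zList_get_mem n r C hi
  have hzn : ∀ i (hi : i < k), (zList n r C)[i]! ≤ n := by
    intro i hi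
    have := hzmem i hi
    rw [mem_pairSet] at this
    exact this.1.2
  -- the intermediate condition
  have main : IsKN n r C ↔ ∀ i (hi : i < k), k - i ≤ Fc n r C ((zList n r C)[i]!) := by
    rw [isKN_iff_counts n r C hC]
    constructor
    · intro h i hi
      have hz := hzmem i hi
      have hzn' := hzn i hi
      have hid := key_identity n r C hC _ hzn'
      have hAB := h _ hz
      have hPc : Pc n r C ((zList n r C)[i]!) = k - i := by
        rw [getElem!_pos (zList n r C) i hi]
        exact Pc_zList n r C hi
      omega
    · intro h z hz
      obtain ⟨i, hi, hiz⟩ := zList_surj n r C hz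
      have hzn' : z ≤ n := by rw [mem_pairSet] at hz; exact hz.1.2
      have hid := key_identity n r C hC z hzn'
      have hPc : Pc n r C z = k - i := by rw [← hiz]; exact Pc_zList n r C hi
      have hFc := h i hi
      rw [getElem!_pos (zList n r C) i hi, hiz] at hFc
      omega
  rw [main]
  constructor
  · -- counting condition ⟹ can split
    intro hS
    -- the invariant: at each step there are at least k - i free letters below the bound
    have inv : ∀ i, ∀ hi : i < k, k - i ≤ (Gs n r C (bnd n r C i)).card := by
      intro i
      induction i with
      | zero =>
        intro hi
        have hz := hzmem 0 hi
        have heq : Gs n r C (bnd n r C 0) = (freeSet n r C).filter (· ≤ (zList n r C)[0]!) := by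
          show Gs n r C ((zList n r C)[0]!) = _
          exact Gs_eq_of_not_free n r C (not_freeP_of_mem_pairSet n r C hz)
        rw [heq]
        simpa [Fc] using hS 0 hi
      | succ i ih =>
        intro hi
        have hi' : i < k := by omega
        have hinv := ih hi'
        have hne : (Gs n r C (bnd n r C i)).Nonempty := by
          rw [← Finset.card_pos]; omega
        have htmem := gmax_mem n r C hne
        rw [← tF_eq] at htmem
        simp only [Gs, Finset.mem_filter] at htmem
        have htfree : tF n r C i ∈ freeSet n r C := htmem.1
        -- Fc (tF i) = card Gs (bnd i) ≥ k - i
        have hFt : Fc n r C (tF n r C i) = (Gs n r C (bnd n r C i)).card := by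
          unfold Fc
          rw [tF_eq, filter_le_gmax n r C hne]
        rcases le_total (tF n r C i) ((zList n r C)[i+1]!) with hcase | hcase
        · -- bound is tF i
          have hbnd : bnd n r C (i+1) = tF n r C i := by
            show min (tF n r C i) ((zList n r C)[i+1]!) = _
            omega
          rw [hbnd]
          have := card_Gs_self n r C htfree
          omega
        · -- bound is zList[i+1]
          have hbnd : bnd n r C (i+1) = (zList n r C)[i+1]! := by
            show min (tF n r C i) ((zList n r C)[i+1]!) = _
            omega
          rw [hbnd]
          have hz := hzmem (i+1) hi
          have heq : Gs n r C ((zList n r C)[i+1]!)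
              = (freeSet n r C).filter (· ≤ (zList n r C)[i+1]!) :=
            Gs_eq_of_not_free n r C (not_freeP_of_mem_pairSet n r C hz)
          rw [heq]
          simpa [Fc] using hS (i+1) hi
    -- bound is ≤ n
    have hbndn : ∀ i, i < k → bnd n r C i ≤ n := by
      intro i hi
      cases i with
      | zero => exact hzn 0 hi
      | succ j =>
        have := hzn (j+1) hi
        show min (tF n r C j) ((zList n r C)[j+1]!) ≤ n
        omega
    -- assemble the splitting sequence
    refine ⟨(List.range k).map (tF n r C), ?_, ?_⟩
    · simp [hk]
    · intro i hi
      have hik : i < k := by simpa using hi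
      have hts : ∀ j, j < k → ((List.range k).map (tF n r C))[j]! = tF n r C j := by
        intro j hj
        rw [getElem!_pos ((List.range k).map (tF n r C)) j (by simpa using hj)]
        simp
      rw [hts i hik]
      have hne : (Gs n r C (bnd n r C i)).Nonempty := by
        rw [← Finset.card_pos]
        have := inv i hik
        omega
      have hgr := gmax_isGreatest n r C (hbndn i hik) hne
      rw [← tF_eq] at hgr
      have hsets : {t : ℕ | 1 ≤ t ∧
          t < (if i = 0 then (zList n r C)[0]! else
            min ((((List.range k).map (tF n r C)))[i-1]!) ((zList n r C)[i]!)) ∧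
          (∀ p, C p ≠ t) ∧ (∀ p, C p ≠ 2 * n + 1 - t)}
          = {t : ℕ | 1 ≤ t ∧ t < bnd n r C i ∧ freeP n r C t} := by
      -- cases on i
        cases i with
        | zero => rfl
        | succ j =>
          have hj : (((List.range k).map (tF n r C)))[(j+1)-1]! = tF n r C j :=
            hts j (by omega)
          rw [hj]
          rfl
      rw [hsets]
      exact hgr
  · -- can split ⟹ counting condition
    rintro ⟨ts, hlen, hgr⟩
    intro i hi
    rw [← hk] at hlen
    -- basic facts about the t_j
    have hfact : ∀ j, j < k →
        1 ≤ ts[j]! ∧ ts[j]! < (zList n r C)[j]! ∧ freeP n r C (ts[j]!) ∧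
          (∀ hj1 : j + 1 < k, ts[j+1]! < ts[j]!) := by
      intro j hj
      have h1 := (hgr j (by omega)).1
      obtain ⟨h1a, h1b, h1c⟩ := h1
      have hlt : ts[j]! < (zList n r C)[j]! := by
        rcases Nat.eq_zero_or_pos j with h | h
        · subst h; simpa using h1b
        · rw [if_neg (by omega)] at h1b
          omega
      refine ⟨h1a, hlt, h1c, ?_⟩
      intro hj1
      have h2 := (hgr (j+1) (by omega)).1
      obtain ⟨-, h2b, -⟩ := h2
      rw [if_neg (by omega)] at h2b
      simp only [Nat.add_sub_cancel] at h2b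
      omega
    -- monotonicity: ts[a+d]! ≤ ts[a]!
    have hmono : ∀ d a, a + d < k → ts[a+d]! ≤ ts[a]! := by
      intro d
      induction d with
      | zero => intro a _; simp
      | succ e ih =>
        intro a ha
        have h1 : ts[a+e+1]! < ts[a+e]! := (hfact (a+e) (by omega)).2.2.2 (by omega)
        have h2 : ts[a+e]! ≤ ts[a]! := ih a (by omega)
        have h3 : a + (e+1) = a + e + 1 := by omega
        rw [h3]
        omega
    have hstrict : ∀ a b, a < b → b < k → ts[b]! < ts[a]! := by
      intro a b hab hb
      have h1 : ts[b]! < ts[b-1]! := by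
        have h := (hfact (b-1) (by omega)).2.2.2 (by omega)
        have hb1 : (b-1)+1 = b := by omega
        rwa [hb1] at h
      have h2 : ts[b-1]! ≤ ts[a]! := by
        have h := hmono (b-1-a) a (by omega)
        have hab' : a + (b-1-a) = b-1 := by omega
        rwa [hab'] at h
      omega
    -- inject Ico i k into the free letters ≤ zList[i]
    have hinj : (Finset.Ico i k).card ≤
        ((freeSet n r C).filter (· ≤ (zList n r C)[i]!)).card := by
      apply Finset.card_le_card_of_injOn (fun j => ts[j]!)
      · intro j hj
        simp only [Finset.coe_Ico, Set.mem_Ico] at hj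
        have hf := hfact j hj.2
        have hzj := hzn j hj.2
        simp only [Finset.mem_coe, Finset.mem_filter, mem_freeSet]
        refine ⟨⟨⟨hf.1, by omega⟩, hf.2.2.1⟩, ?_⟩
        have h1 : ts[j]! ≤ ts[i]! := by
          rcases eq_or_lt_of_le hj.1 with h | h
          · rw [h]
          · exact le_of_lt (hstrict i j h hj.2)
        have h2 : ts[i]! < (zList n r C)[i]! := (hfact i hi).2.1
        omega
      · intro a ha b hb hab
        simp only [Finset.coe_Ico, Set.mem_Ico] at ha hb
        have hab' : ts[a]! = ts[b]! := hab
        by_contra hne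
        rcases lt_trichotomy a b with h | h | h
        · have := hstrict a b h hb.2; omega
        · exact hne h
        · have := hstrict b a h ha.2; omega
    rw [Nat.card_Ico] at hinj
    exact hinj
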